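/- For every n ≥ 1, every τ ∈ 𝕋, and every ν ∈ {α, β, γ}, the para-orthogonal rational function Q_n^ν(z, τ) = φ_n^ν(z) + τ·φ_n^{ν*}(z) has exactly n zeros, all of which are simple and lie on 𝕋; equivalently, the numerator polynomial p_n^ν + τ·ς_n·p_n^{ν*} (of degree n) has n distinct roots, all on 𝕋, none of which is a root of π_n^ν. -/

import Mathlib

noncomputable section
open MeasureTheory
open scoped Classical

namespace ORF

/-- complex conjugation -/
def conj' (z : ℂ) : ℂ := (starRingEnd ℂ) z

/-- membership in the unit circle 𝕋 -/
def onT (z : ℂ) : Prop := ‖z‖ = 1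

/-- `z` is a (strictly) positive real number -/
def posR (z : ℂ) : Prop := 0 < z.re ∧ z.im = 0

/-- σ_j = conj(α_j)/|α_j| (σ_j = 1 if α_j = 0, i.e. if β_j = ∞) -/
def sig (α : ℕ → ℂ) (j : ℕ) : ℂ :=
  if α j = 0 then 1 else conj' (α j) / ((‖α j‖ : ℝ) : ℂ)

/-- ς_n = ∏_{j=1}^n σ_j -/
def sigProd (α : ℕ → ℂ) (n : ℕ) : ℂ := ∏ j ∈ Finset.Icc 1 n, sig α j

/-- ϖ_j^α(z) = 1 − conj(α_j)·z, as a polynomial in z -/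
def wA (α : ℕ → ℂ) (j : ℕ) : Polynomial ℂ :=
  1 - Polynomial.C (conj' (α j)) * Polynomial.X

/-- ϖ_j^β(z) = 1 − conj(β_j)·z = 1 − z/α_j, and −z when β_j = ∞ (α_j = 0) -/
def wB (α : ℕ → ℂ) (j : ℕ) : Polynomial ℂ :=
  if α j = 0 then -Polynomial.X else 1 - Polynomial.C (α j)⁻¹ * Polynomial.X

/-- ϖ_j = ϖ_j^γ (γ_j = α_j when `c j`, γ_j = β_j otherwise) -/
def wG (α : ℕ → ℂ) (c : ℕ → Bool) (j : ℕ) : Polynomial ℂ :=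
  if c j then wA α j else wB α j

/-- π_n^α -/
def piA (α : ℕ → ℂ) (n : ℕ) : Polynomial ℂ := ∏ j ∈ Finset.Icc 1 n, wA α j
/-- π_n^β -/
def piB (α : ℕ → ℂ) (n : ℕ) : Polynomial ℂ := ∏ j ∈ Finset.Icc 1 n, wB α j
/-- π_n = π_n^γ -/
def piG (α : ℕ → ℂ) (c : ℕ → Bool) (n : ℕ) : Polynomial ℂ := ∏ j ∈ Finset.Icc 1 n, wG α c j

/-- 𝕒_n = {1 ≤ j ≤ n : γ_j = α_j} -/
def aSet (c : ℕ → Bool) (n : ℕ) : Finset ℕ := (Finset.Icc 1 n).filter (fun j => c j = true)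
/-- 𝕓_n = {1 ≤ j ≤ n : γ_j = β_j} -/
def bSet (c : ℕ → Bool) (n : ℕ) : Finset ℕ := (Finset.Icc 1 n).filter (fun j => c j = false)

/-- Blaschke factor ζ_j^α -/
def zetaA (α : ℕ → ℂ) (j : ℕ) (z : ℂ) : ℂ :=
  if α j = 0 then z else sig α j * (z - α j) / (1 - conj' (α j) * z)

/-- Blaschke factor ζ_j^β (β_j = 1/conj(α_j); ζ_j^β(z) = 1/z when β_j = ∞) -/
def zetaB (α : ℕ → ℂ) (j : ℕ) (z : ℂ) : ℂ :=
  if α j = 0 then z⁻¹ else sig α j * (z - (conj' (α j))⁻¹) / (1 - z / α j)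

/-- ζ_j = ζ_j^γ -/
def zetaG (α : ℕ → ℂ) (c : ℕ → Bool) (j : ℕ) (z : ℂ) : ℂ :=
  if c j then zetaA α j z else zetaB α j z

/-- B_n^α -/
def BA (α : ℕ → ℂ) (n : ℕ) (z : ℂ) : ℂ := ∏ j ∈ Finset.Icc 1 n, zetaA α j z
/-- B_n^β -/
def BB (α : ℕ → ℂ) (n : ℕ) (z : ℂ) : ℂ := ∏ j ∈ Finset.Icc 1 n, zetaB α j z
/-- B̌_n^α = ∏_{j ∈ 𝕒_n} ζ_j -/
def BcA (α : ℕ → ℂ) (c : ℕ → Bool) (n : ℕ) (z : ℂ) : ℂ := ∏ j ∈ aSet c n, zetaG α c j z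
/-- B̌_n^β = ∏_{j ∈ 𝕓_n} ζ_j -/
def BcB (α : ℕ → ℂ) (c : ℕ → Bool) (n : ℕ) (z : ℂ) : ℂ := ∏ j ∈ bSet c n, zetaG α c j z

/-- ζ̌_n^α (= ζ_n if γ_n = α_n, = 1 otherwise) -/
def zcA (α : ℕ → ℂ) (c : ℕ → Bool) (n : ℕ) (z : ℂ) : ℂ :=
  if c n then zetaG α c n z else 1
/-- ζ̌_n^β (= ζ_n if γ_n = β_n, = 1 otherwise) -/
def zcB (α : ℕ → ℂ) (c : ℕ → Bool) (n : ℕ) (z : ℂ) : ℂ :=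
  if c n then 1 else zetaG α c n z

/-- The space L_n^ν = {p/π_n^ν : deg p ≤ n}; a function `f` belongs to it if it agrees
with such a rational function on the unit circle (where all these objects live). -/
def Lsp (pip : ℕ → Polynomial ℂ) (n : ℕ) : Set (ℂ → ℂ) :=
  {f | ∃ p : Polynomial ℂ, p.natDegree ≤ n ∧ ∀ z, onT z → f z = p.eval z / (pip n).eval z}

/-- L_{n*}^ν = {f_* : f ∈ L_n^ν} (again as functions on the unit circle, where
f_*(z) = conj(f(1/conj z)) = conj(f(z))) -/
def LstarSp (pip : ℕ → Polynomial ℂ) (n : ℕ) : Set (ℂ → ℂ) :=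
  {f | ∃ p : Polynomial ℂ, p.natDegree ≤ n ∧ ∀ z, onT z → f z = conj' (p.eval z / (pip n).eval z)}

/-- R_n^ν = L_n^ν · L_{n*}^ν -/
def Rset (pip : ℕ → Polynomial ℂ) (n : ℕ) : Set (ℂ → ℂ) :=
  {h | ∃ g ∈ Lsp pip n, ∃ k ∈ LstarSp pip n, ∀ z, onT z → h z = g z * k z}

/-- the substar conjugate f_*(z) = conj(f(1/conj z)) -/
def substar (f : ℂ → ℂ) : ℂ → ℂ := fun z => conj' (f ((conj' z)⁻¹))

/-- superstar conjugate q^*(z) = z^n conj(q(1/conj z)) of a polynomial of degree ≤ n -/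
def pstar (n : ℕ) (q : Polynomial ℂ) : Polynomial ℂ :=
  ∑ k ∈ Finset.range (n + 1), Polynomial.C (conj' (q.coeff k)) * Polynomial.X ^ (n - k)

/-- the inner product ⟨f,g⟩ = ∫ conj(f) g dμ -/
def inn (μ : Measure ℂ) (f g : ℂ → ℂ) : ℂ := ∫ z, conj' (f z) * g z ∂μ

/-- the reciprocal ORF φ_n^{ν*} = B_n^ν (φ_n^ν)_* (resp. φ_n^* = B̌_n^α B̌_n^β (φ_n)_*),
written out as the rational function ς_n p_n^{ν*}/π_n^ν -/
def starF (α : ℕ → ℂ) (pip : ℕ → Polynomial ℂ) (p : ℕ → Polynomial ℂ) (n : ℕ) (z : ℂ) : ℂ :=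
  sigProd α n * (pstar n (p n)).eval z / (pip n).eval z

/-- `μ` is a probability measure on the unit circle 𝕋, positive a.e. on 𝕋 -/
structure CircleMeasure (μ : Measure ℂ) : Prop where
  prob : IsProbabilityMeasure μ
  circ : μ {z | ¬ onT z} = 0
  pos : ∀ U : Set ℂ, IsOpen U → (U ∩ {z | onT z}).Nonempty → 0 < μ U

/-- `φ` (with numerators `p`) is the sequence of orthonormal rational functions for the
nested spaces `Lsp pip`: φ_0 = 1, φ_n = p_n/π_n ∈ L_n \ L_{n-1}, φ_n ⊥ L_{n-1}, ‖φ_n‖ = 1. -/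
structure IsORF (μ : Measure ℂ) (pip : ℕ → Polynomial ℂ) (φ : ℕ → ℂ → ℂ)
    (p : ℕ → Polynomial ℂ) : Prop where
  rep : ∀ n z, φ n z = (p n).eval z / (pip n).eval z
  deg : ∀ n, (p n).natDegree ≤ n
  p0 : p 0 = 1
  notmem : ∀ n, 1 ≤ n → φ n ∉ Lsp pip (n - 1)
  orth : ∀ n, 1 ≤ n → ∀ f ∈ Lsp pip (n - 1), inn μ (φ n) f = 0
  norm : ∀ n, inn μ (φ n) (φ n) = 1

/-- normalization φ_n^{α*}(α_n) > 0 -/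
def normA (α : ℕ → ℂ) (p : ℕ → Polynomial ℂ) (n : ℕ) : Prop :=
  posR (sigProd α n * (pstar n (p n)).eval (α n) / (piA α n).eval (α n))

/-- normalization φ_n^{β*}(β_n) > 0 (when β_n = ∞ the value is the limit,
i.e. the ratio of the coefficients of z^n) -/
def normB (α : ℕ → ℂ) (p : ℕ → Polynomial ℂ) (n : ℕ) : Prop :=
  if α n = 0 then posR (sigProd α n * (pstar n (p n)).coeff n / (piB α n).coeff n)
  else posR (sigProd α n * (pstar n (p n)).eval ((conj' (α n))⁻¹) /
    (piB α n).eval ((conj' (α n))⁻¹))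

/-- π̌_n^α = ∏_{j∈𝕒_n} ϖ_j -/
def pidA (α : ℕ → ℂ) (c : ℕ → Bool) (n : ℕ) : Polynomial ℂ := ∏ j ∈ aSet c n, wA α j
/-- π̌_n^β = ∏_{j∈𝕓_n} ϖ_j -/
def pidB (α : ℕ → ℂ) (c : ℕ → Bool) (n : ℕ) : Polynomial ℂ := ∏ j ∈ bSet c n, wB α j
/-- ∏_{j∈𝕓_n}(z − β_j), a factor being −1 when β_j = ∞ -/
def dB (α : ℕ → ℂ) (c : ℕ → Bool) (n : ℕ) : Polynomial ℂ :=
  ∏ j ∈ bSet c n,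
    (if α j = 0 then (-1 : Polynomial ℂ) else Polynomial.X - Polynomial.C ((conj' (α j))⁻¹))
/-- ∏_{j∈𝕒_n}(z − α_j) -/
def dA (α : ℕ → ℂ) (c : ℕ → Bool) (n : ℕ) : Polynomial ℂ :=
  ∏ j ∈ aSet c n, (Polynomial.X - Polynomial.C (α j))

/-- ς̌_n^α = ∏_{j∈𝕒_n} σ_j -/
def sigcA (α : ℕ → ℂ) (c : ℕ → Bool) (n : ℕ) : ℂ := ∏ j ∈ aSet c n, sig α j
/-- ς̌_n^β = ∏_{j∈𝕓_n} σ_j -/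
def sigcB (α : ℕ → ℂ) (c : ℕ → Bool) (n : ℕ) : ℂ := ∏ j ∈ bSet c n, sig α j

/-- normalization for the γ-sequence: (φ_n^*/B̌_n^β)(α_n) > 0 when γ_n = α_n and
(φ_n^*/B̌_n^α)(β_n) > 0 when γ_n = β_n, written via the identities
φ_n^*/B̌_n^β = ς̌_n^α p_n^*/(π̌_n^α ∏_{j∈𝕓_n}(z−β_j)) and
φ_n^*/B̌_n^α = ς̌_n^β p_n^*/(π̌_n^β ∏_{j∈𝕒_n}(z−α_j)) (the value at β_n = ∞ being the
limit, i.e. the ratio of the coefficients of z^n). -/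
def normG (α : ℕ → ℂ) (c : ℕ → Bool) (p : ℕ → Polynomial ℂ) (n : ℕ) : Prop :=
  if c n then
    posR (sigcA α c n * (pstar n (p n)).eval (α n) /
      ((pidA α c n).eval (α n) * (dB α c n).eval (α n)))
  else if α n = 0 then
    posR (sigcB α c n * (pstar n (p n)).coeff n / ((pidB α c n) * dA α c n).coeff n)
  else
    posR (sigcB α c n * (pstar n (p n)).eval ((conj' (α n))⁻¹) /
      ((pidB α c n) * dA α c n).eval ((conj' (α n))⁻¹))

/-- the reproducing kernel k_n(z,w) = Σ_{k=0}^n φ_k(z) conj(φ_k(w)) -/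
def ker (φ : ℕ → ℂ → ℂ) (n : ℕ) (z w : ℂ) : ℂ :=
  ∑ k ∈ Finset.range (n + 1), φ k z * conj' (φ k w)

/-- evaluation of a polynomial of degree ≤ m at γ_j (its coefficient of z^m when γ_j = ∞) -/
def gEval (α : ℕ → ℂ) (c : ℕ → Bool) (m j : ℕ) (q : Polynomial ℂ) : ℂ :=
  if c j then q.eval (α j)
  else if α j = 0 then q.coeff m
  else q.eval ((conj' (α j))⁻¹)

/-- evaluation of a polynomial of degree ≤ m at β_j (its coefficient of z^m when β_j = ∞) -/
def bEval (α : ℕ → ℂ) (m j : ℕ) (q : Polynomial ℂ) : ℂ :=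
  if α j = 0 then q.coeff m else q.eval ((conj' (α j))⁻¹)

/-- η_n^α (the unimodular constant in the Szegő parameter λ_n^α) -/
def etaA (α : ℕ → ℂ) (p : ℕ → Polynomial ℂ) (n : ℕ) : ℂ :=
  conj' (sigProd α (n - 2)) * conj' ((pstar (n - 1) (p (n - 1))).eval (α (n - 1))) /
    ((pstar (n - 1) (p (n - 1))).eval (α (n - 1)))

/-- the Szegő parameter λ_n^α -/
def lamA (α : ℕ → ℂ) (p : ℕ → Polynomial ℂ) (n : ℕ) : ℂ :=
  etaA α p n * (p n).eval (α (n - 1)) / conj' ((pstar n (p n)).eval (α (n - 1)))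

/-- η_n^β -/
def etaB (α : ℕ → ℂ) (p : ℕ → Polynomial ℂ) (n : ℕ) : ℂ :=
  conj' (sigProd α (n - 2)) * conj' (bEval α (n - 1) (n - 1) (pstar (n - 1) (p (n - 1)))) /
    (bEval α (n - 1) (n - 1) (pstar (n - 1) (p (n - 1))))

/-- the Szegő parameter λ_n^β -/
def lamB (α : ℕ → ℂ) (p : ℕ → Polynomial ℂ) (n : ℕ) : ℂ :=
  etaB α p n * bEval α n (n - 1) (p n) / conj' (bEval α n (n - 1) (pstar n (p n)))

/-- η_n = η_n^γ -/
def etaG (α : ℕ → ℂ) (c : ℕ → Bool) (p : ℕ → Polynomial ℂ) (n : ℕ) : ℂ :=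
  conj' (sigProd α (n - 2)) * conj' (gEval α c (n - 1) (n - 1) (pstar (n - 1) (p (n - 1)))) /
    (gEval α c (n - 1) (n - 1) (pstar (n - 1) (p (n - 1))))

/-- the Szegő parameter λ_n = λ_n^γ -/
def lamG (α : ℕ → ℂ) (c : ℕ → Bool) (p : ℕ → Polynomial ℂ) (n : ℕ) : ℂ :=
  etaG α c p n * gEval α c n (n - 1) (p n) / conj' (gEval α c n (n - 1) (pstar n (p n)))

/-- functions of the second kind: ψ(z) = ∫ E(t,z) φ(t) − D(t,z) φ(z) dμ(t) -/
def psi (μ : Measure ℂ) (φ : ℂ → ℂ) (z : ℂ) : ℂ :=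
  ∫ t, (2 * t / (t - z)) * φ t - ((t + z) / (t - z)) * φ z ∂μ

/-- ∏_{j=k+1}^n ϖ_j -/
def tailProd (α : ℕ → ℂ) (c : ℕ → Bool) (n k : ℕ) : Polynomial ℂ :=
  ∏ j ∈ Finset.Icc (k + 1) n, wG α c j

/-- the numerator C_n(z,w) of the kernel k_n = C_n/(π_n(z) conj(π_n(w))), as a polynomial
in w after conjugation: C_n(z,w) = conj((CnPoly n z).eval w) -/
def CnPoly (α : ℕ → ℂ) (c : ℕ → Bool) (p : ℕ → Polynomial ℂ) (n : ℕ) (z : ℂ) : Polynomial ℂ :=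
  ∑ k ∈ Finset.range (n + 1),
    Polynomial.C (conj' ((p k).eval z * (tailProd α c n k).eval z)) * ((p k) * tailProd α c n k)

/-- z ↦ C_n(z,∞) (the coefficient of w^n of w ↦ C_n(z,w)), as a polynomial in z -/
def CnInf (α : ℕ → ℂ) (c : ℕ → Bool) (p : ℕ → Polynomial ℂ) (n : ℕ) : Polynomial ℂ :=
  ∑ k ∈ Finset.range (n + 1),
    ((p k) * tailProd α c n k) * Polynomial.C (conj' (((p k) * tailProd α c n k).coeff n))

/-- ϖ_n^*(z) = z − γ_n (= −1 when γ_n = ∞) -/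
def wstarG (α : ℕ → ℂ) (c : ℕ → Bool) (n : ℕ) : Polynomial ℂ :=
  if c n then Polynomial.X - Polynomial.C (α n)
  else if α n = 0 then -1
  else Polynomial.X - Polynomial.C ((conj' (α n))⁻¹)

end ORF

open ORF MeasureTheory


namespace ORFAux
open ORF Polynomial

lemma conj'_conj' (z : ℂ) : conj' (conj' z) = z := Complex.conj_conj z

lemma onT_ne_zero {z : ℂ} (h : onT z) : z ≠ 0 := by
  intro h0; rw [h0] at h; simp [onT] at h

lemma onT_conj_mul {z : ℂ} (h : onT z) : conj' z * z = 1 := by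
  have : z * (starRingEnd ℂ) z = ((Complex.normSq z : ℝ) : ℂ) := (Complex.mul_conj z)
  have h2 : Complex.normSq z = 1 := by
    rw [Complex.normSq_eq_norm_sq, h]; norm_num
  rw [h2] at this
  simpa [conj', mul_comm] using this

lemma onT_conj {z : ℂ} (h : onT z) : conj' z = z⁻¹ := by
  field_simp [onT_ne_zero h]
  simpa [mul_comm] using onT_conj_mul h

lemma unimodular_conj_mul {w : ℂ} (h : ‖w‖ = 1) : conj' w * w = 1 :=
  onT_conj_mul h

lemma conj'_ne_zero {w : ℂ} (h : w ≠ 0) : conj' w ≠ 0 := by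
  simpa [conj'] using (star_ne_zero).2 h

lemma norm_sq_cast (w : ℂ) : ((‖w‖^2 : ℝ) : ℂ) = w * conj' w := by
  rw [conj', Complex.mul_conj]
  norm_cast
  rw [Complex.normSq_eq_norm_sq]

/-! ### pstar toolkit -/

lemma pstar_coeff (n : ℕ) (q : Polynomial ℂ) (j : ℕ) :
    (pstar n q).coeff j = if j ≤ n then conj' (q.coeff (n - j)) else 0 := by
  unfold pstar
  rw [finset_sum_coeff]
  simp only [coeff_C_mul, coeff_X_pow]
  by_cases hj : j ≤ n
  · rw [if_pos hj, Finset.sum_eq_single (n - j)]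
    · rw [if_pos (by omega)]; ring
    · intro k hk hkne
      rw [if_neg (by
        intro hc
        exact hkne (by simp at hk; omega))]
      ring
    · intro hmem
      exact absurd (Finset.mem_range.2 (by omega)) hmem
  · rw [if_neg hj]
    apply Finset.sum_eq_zero
    intro k hk
    simp at hk
    rw [if_neg (by omega)]
    ring

lemma natDegree_pstar_le (n : ℕ) (q : Polynomial ℂ) : (pstar n q).natDegree ≤ n := by
  apply natDegree_le_iff_coeff_eq_zero.2
  intro m hm
  rw [pstar_coeff, if_neg (by omega)]

lemma pstar_eval {n : ℕ} {q : Polynomial ℂ} (hq : q.natDegree ≤ n) {z : ℂ} (hz : z ≠ 0) :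
    (pstar n q).eval z = z ^ n * conj' (q.eval ((conj' z)⁻¹)) := by
  unfold pstar
  rw [eval_finset_sum]
  have hev : q.eval ((conj' z)⁻¹) = ∑ k ∈ Finset.range (n+1), q.coeff k * ((conj' z)⁻¹) ^ k :=
    eval_eq_sum_range' (by omega) _
  rw [hev, conj', map_sum, Finset.mul_sum]
  apply Finset.sum_congr rfl
  intro k hk
  simp only [Finset.mem_range] at hk
  simp only [eval_mul, eval_C, eval_pow, eval_X, map_mul, map_pow, map_inv₀,
    Complex.conj_conj]
  rw [pow_sub₀ z hz (by omega : k ≤ n)]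
  simp only [conj', Complex.conj_conj]
  field_simp
  rw [mul_assoc, ← mul_pow, mul_one_div_cancel hz, one_pow, mul_one]

lemma pstar_eval_onT {n : ℕ} {q : Polynomial ℂ} (hq : q.natDegree ≤ n) {z : ℂ} (hz : onT z) :
    (pstar n q).eval z = z ^ n * conj' (q.eval z) := by
  rw [pstar_eval hq (onT_ne_zero hz), onT_conj hz, inv_inv]

lemma pstar_mul {N m₁ m₂ : ℕ} (hN : N = m₁ + m₂) {f g : Polynomial ℂ}
    (hf : f.natDegree ≤ m₁) (hg : g.natDegree ≤ m₂) :
    pstar N (f * g) = pstar m₁ f * pstar m₂ g := by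
  subst hN
  apply Polynomial.eq_of_infinite_eval_eq
  apply Set.Infinite.mono (s := {(0:ℂ)}ᶜ)
  · intro z hz
    have hz' : z ≠ 0 := hz
    have hfg : (f * g).natDegree ≤ m₁ + m₂ :=
      natDegree_mul_le.trans (add_le_add hf hg)
    simp only [Set.mem_setOf_eq, eval_mul]
    rw [pstar_eval hfg hz', pstar_eval hf hz', pstar_eval hg hz',
      eval_mul, conj', map_mul, pow_add]
    simp only [conj']
    ring
  · exact (Set.finite_singleton 0).infinite_compl

lemma pstar_pstar {n : ℕ} {q : Polynomial ℂ} (hq : q.natDegree ≤ n) :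
    pstar n (pstar n q) = q := by
  ext j
  rw [pstar_coeff]
  by_cases hj : j ≤ n
  · rw [if_pos hj, pstar_coeff, if_pos (by omega)]
    rw [Nat.sub_sub_self hj, conj'_conj']
  · rw [if_neg hj]
    exact (coeff_eq_zero_of_natDegree_lt (by omega)).symm

lemma pstar_add (n : ℕ) (f g : Polynomial ℂ) :
    pstar n (f + g) = pstar n f + pstar n g := by
  ext j
  simp only [pstar_coeff, coeff_add]
  split <;> simp [conj', map_add]

lemma pstar_C_mul (n : ℕ) (a : ℂ) (g : Polynomial ℂ) :
    pstar n (Polynomial.C a * g) = Polynomial.C (conj' a) * pstar n g := by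
  ext j
  simp only [pstar_coeff, coeff_C_mul]
  split <;> simp [conj', map_mul]

lemma pstar_one_eq (s : Polynomial ℂ) :
    pstar 1 s = Polynomial.C (conj' (s.coeff 0)) * Polynomial.X + Polynomial.C (conj' (s.coeff 1)) := by
  unfold pstar
  rw [Finset.sum_range_succ, Finset.sum_range_one]
  norm_num


/-! ### structure of the factors ϖ -/

lemma natDegree_wA_le (α : ℕ → ℂ) (j : ℕ) : (wA α j).natDegree ≤ 1 := by
  unfold wA
  apply (natDegree_sub_le _ _).trans
  apply max_le (by simp)
  exact (natDegree_C_mul_le _ _).trans (by simp)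

lemma natDegree_wB_le (α : ℕ → ℂ) (j : ℕ) : (wB α j).natDegree ≤ 1 := by
  unfold wB
  split
  · simp
  · apply (natDegree_sub_le _ _).trans
    apply max_le (by simp)
    exact (natDegree_C_mul_le _ _).trans (by simp)

lemma natDegree_wG_le (α : ℕ → ℂ) (c : ℕ → Bool) (j : ℕ) : (wG α c j).natDegree ≤ 1 := by
  unfold wG; split
  · exact natDegree_wA_le α j
  · exact natDegree_wB_le α j

lemma abs_ne_zero_of_ne {w : ℂ} (h : w ≠ 0) : ‖w‖ ≠ 0 := by
  simpa using h

lemma inv_conj_ne {w : ℂ} (hw : ‖w‖ < 1) (h0 : w ≠ 0) : (conj' w)⁻¹ ≠ w := by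
  intro h
  have hx : ‖w‖ ≠ 0 := abs_ne_zero_of_ne h0
  have h2 : (‖w‖)⁻¹ = ‖w‖ := by
    have := congrArg Norm.norm h
    rwa [norm_inv, conj', Complex.norm_conj] at this
  have h1 : ‖w‖ * ‖w‖ = 1 := by
    nth_rewrite 2 [← h2]
    exact mul_inv_cancel₀ hx
  nlinarith [norm_nonneg w]

lemma wG_eval_ne (α : ℕ → ℂ) (c : ℕ → Bool) (hα : ∀ j, ‖α j‖ < 1)
    {z : ℂ} (hz : onT z) (j : ℕ) : (wG α c j).eval z ≠ 0 := by
  have hαj := hα j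
  unfold wG wA wB
  split
  · simp only [eval_sub, eval_one, eval_mul, eval_C, eval_X]
    intro h
    have : conj' (α j) * z = 1 := by linear_combination -h
    have habs := congrArg Norm.norm this
    rw [norm_mul] at habs
    rw [conj', Complex.norm_conj, show ‖z‖ = 1 from hz, mul_one] at habs
    simp at habs
    rw [habs] at hαj; linarith
  · split
    · simp [onT_ne_zero hz]
    · rename_i hαj0
      simp only [eval_sub, eval_one, eval_mul, eval_C, eval_X]
      intro h
      have : z = α j := by
        field_simp at h
        linear_combination -h
      rw [this] at hz
      rw [onT] at hz; rw [hz] at hαj; linarith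

lemma piG_eval_ne (α : ℕ → ℂ) (c : ℕ → Bool) (hα : ∀ j, ‖α j‖ < 1)
    {z : ℂ} (hz : onT z) (n : ℕ) : (piG α c n).eval z ≠ 0 := by
  unfold piG
  rw [eval_prod]
  exact Finset.prod_ne_zero_iff.2 (fun j _ => wG_eval_ne α c hα hz j)

lemma natDegree_piG_le (α : ℕ → ℂ) (c : ℕ → Bool) (n : ℕ) : (piG α c n).natDegree ≤ n := by
  unfold piG
  apply (natDegree_prod_le _ _).trans
  calc ∑ j ∈ Finset.Icc 1 n, (wG α c j).natDegree ≤ ∑ j ∈ Finset.Icc 1 n, 1 :=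
        Finset.sum_le_sum (fun j _ => natDegree_wG_le α c j)
    _ = n := by simp

lemma piG_succ (α : ℕ → ℂ) (c : ℕ → Bool) (m : ℕ) :
    piG α c (m + 1) = piG α c m * wG α c (m + 1) := by
  unfold piG
  rw [Finset.prod_Icc_succ_top (by omega)]

lemma abs_sigProd (α : ℕ → ℂ) (n : ℕ) : ‖sigProd α n‖ = 1 := by
  unfold sigProd
  rw [norm_prod]
  apply Finset.prod_eq_one
  intro j _
  unfold sig
  split
  · simp
  · rename_i h
    rw [norm_div, conj', Complex.norm_conj, Complex.norm_real, norm_norm]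
    exact div_self (abs_ne_zero_of_ne h)

lemma coeff0_one_sub (u : ℂ) : (1 - Polynomial.C u * Polynomial.X).coeff 0 = 1 := by simp
lemma coeff1_one_sub (u : ℂ) : (1 - Polynomial.C u * Polynomial.X).coeff 1 = -u := by
  simp [coeff_one]

/-- structure of ϖ_n and its reverse: either the degenerate case (ϖ = 1) or
ϖ = e (X - t) with reverse not vanishing at t -/
lemma wG_structure (α : ℕ → ℂ) (c : ℕ → Bool) (hα : ∀ j, ‖α j‖ < 1) (n : ℕ) :
    (wG α c n = 1 ∧ pstar 1 (wG α c n) = Polynomial.X) ∨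
    (∃ e t : ℂ, e ≠ 0 ∧ wG α c n = Polynomial.C e * (Polynomial.X - Polynomial.C t) ∧
      (pstar 1 (wG α c n)).eval t ≠ 0) := by
  have hαn := hα n
  by_cases hc : c n
  · by_cases h0 : α n = 0
    · left
      have hwg : wG α c n = 1 := by unfold wG wA; rw [if_pos hc, h0]; simp [conj']
      refine ⟨hwg, ?_⟩
      rw [hwg, pstar_one_eq]
      simp [conj', coeff_one]
    · right
      have hwg : wG α c n = 1 - Polynomial.C (conj' (α n)) * Polynomial.X := by
        unfold wG wA; rw [if_pos hc]
      have hc0 : conj' (α n) ≠ 0 := conj'_ne_zero h0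
      refine ⟨-conj' (α n), (conj' (α n))⁻¹, by simpa using hc0, ?_, ?_⟩
      · rw [hwg, mul_sub, ← Polynomial.C_mul,
          show -conj' (α n) * (conj' (α n))⁻¹ = -1 by field_simp]
        simp only [Polynomial.C_neg, Polynomial.C_1]
        ring
      · have hps : pstar 1 (wG α c n) = Polynomial.X - Polynomial.C (α n) := by
          rw [hwg, pstar_one_eq, coeff0_one_sub, coeff1_one_sub]
          simp only [conj', map_one, map_neg, Complex.conj_conj, Polynomial.C_neg,
            Polynomial.C_1]
          try ring
        rw [hps]
        simp only [eval_sub, eval_X, eval_C, sub_ne_zero]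
        exact inv_conj_ne hαn h0
  · by_cases h0 : α n = 0
    · right
      have hwg : wG α c n = -Polynomial.X := by
        unfold wG wB; rw [if_neg hc, if_pos h0]
      refine ⟨-1, 0, by norm_num, by rw [hwg]; simp, ?_⟩
      have hps : pstar 1 (wG α c n) = -1 := by
        rw [hwg, pstar_one_eq]
        simp [conj']
      rw [hps]; simp
    · right
      have hwg : wG α c n = 1 - Polynomial.C (α n)⁻¹ * Polynomial.X := by
        unfold wG wB; rw [if_neg hc, if_neg h0]
      refine ⟨-(α n)⁻¹, α n, by simpa using h0, ?_, ?_⟩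
      · rw [hwg, mul_sub, ← Polynomial.C_mul,
          show -(α n)⁻¹ * α n = -1 by field_simp]
        simp only [Polynomial.C_neg, Polynomial.C_1]
        ring
      · have hps : pstar 1 (wG α c n) = Polynomial.X - Polynomial.C ((conj' (α n))⁻¹) := by
          rw [hwg, pstar_one_eq, coeff0_one_sub, coeff1_one_sub]
          simp only [conj', map_one, map_neg, map_inv₀, Polynomial.C_1, Polynomial.C_neg]
          try ring
        rw [hps]
        simp only [eval_sub, eval_X, eval_C, sub_ne_zero]
        exact fun h => (inv_conj_ne hαn h0) h.symm

lemma natDegree_divX_le' {h : Polynomial ℂ} {n : ℕ} (hh : h.natDegree ≤ n) (hn : 1 ≤ n) :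
    h.divX.natDegree ≤ n - 1 := by
  by_cases h0 : h.divX = 0
  · simp [h0]
  · have hX : (Polynomial.X * h.divX).natDegree = 1 + h.divX.natDegree := by
      rw [natDegree_mul Polynomial.X_ne_zero h0]; simp
    have hdeg : h.natDegree = 1 + h.divX.natDegree := by
      conv_lhs => rw [← Polynomial.X_mul_divX_add h]
      rw [Polynomial.natDegree_add_C]
      exact hX
    omega

/-- every polynomial of degree ≤ n is ϖ·r + ϖ̃·s with deg r, s ≤ n-1 -/
lemma span_lemma (α : ℕ → ℂ) (c : ℕ → Bool) (hα : ∀ j, ‖α j‖ < 1)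
    (n : ℕ) (hn : 1 ≤ n) (h : Polynomial ℂ) (hh : h.natDegree ≤ n) :
    ∃ r s : Polynomial ℂ, r.natDegree ≤ n - 1 ∧ s.natDegree ≤ n - 1 ∧
      h = wG α c n * r + pstar 1 (wG α c n) * s := by
  rcases wG_structure α c hα n with ⟨h1, h2⟩ | ⟨e, t, he, hw, hwt⟩
  · refine ⟨Polynomial.C (h.coeff 0), h.divX, by simp, natDegree_divX_le' hh hn, ?_⟩
    rw [h2, h1, one_mul, add_comm]
    exact (Polynomial.X_mul_divX_add h).symm
  · set wt := pstar 1 (wG α c n) with hwtdef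
    set s : Polynomial ℂ := Polynomial.C (h.eval t / wt.eval t) with hs
    set k : Polynomial ℂ := h - wt * s with hk
    have hkt : k.eval t = 0 := by
      rw [hk]
      simp only [eval_sub, eval_mul, hs, eval_C]
      field_simp
      ring
    have hdvd : (Polynomial.X - Polynomial.C t) ∣ k := (dvd_iff_isRoot).2 hkt
    obtain ⟨r₀, hr₀⟩ := hdvd
    have hkdeg : k.natDegree ≤ n := by
      rw [hk]
      apply (natDegree_sub_le _ _).trans
      apply max_le hh
      apply natDegree_mul_le.trans
      have h1 : wt.natDegree ≤ 1 := natDegree_pstar_le 1 _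
      have h2 : (s).natDegree = 0 := by rw [hs]; simp
      omega
    have hr₀deg : r₀.natDegree ≤ n - 1 := by
      by_cases hr0 : r₀ = 0
      · simp [hr0]
      · have : k.natDegree = 1 + r₀.natDegree := by
          rw [hr₀, natDegree_mul (X_sub_C_ne_zero t) hr0]
          simp
        omega
    refine ⟨Polynomial.C e⁻¹ * r₀, s, (natDegree_C_mul_le _ _).trans hr₀deg, by simp [hs], ?_⟩
    rw [hw]
    have hcomb : Polynomial.C e * (Polynomial.X - Polynomial.C t) * (Polynomial.C e⁻¹ * r₀)
        = Polynomial.C (e * e⁻¹) * ((Polynomial.X - Polynomial.C t) * r₀) := by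
      rw [Polynomial.C_mul]; ring
    rw [hcomb, mul_inv_cancel₀ he, Polynomial.C_1, one_mul, ← hr₀]
    rw [hk]
    ring

/-! ### the circle is infinite -/

lemma onT_infinite : {z : ℂ | onT z}.Infinite := by
  have key : ∀ t : ℝ, onT (⟨(1-t^2)/(1+t^2), 2*t/(1+t^2)⟩ : ℂ) := by
    intro t
    have ht : (1:ℝ) + t^2 ≠ 0 := by positivity
    rw [onT, Complex.norm_def]
    rw [show Complex.normSq (⟨(1-t^2)/(1+t^2), 2*t/(1+t^2)⟩ : ℂ)
        = ((1-t^2)/(1+t^2))^2 + (2*t/(1+t^2))^2 by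
      rw [Complex.normSq_apply]; ring]
    rw [show ((1-t^2)/(1+t^2))^2 + (2*t/(1+t^2))^2 = 1 by field_simp; ring]
    exact Real.sqrt_one
  apply Set.infinite_of_injOn_mapsTo
    (f := fun t : ℝ => (⟨(1-t^2)/(1+t^2), 2*t/(1+t^2)⟩ : ℂ)) (s := Set.Ico (0:ℝ) 1)
  · intro a ha b hb hab
    simp only [Set.mem_Ico] at ha hb
    have ha2 : (1:ℝ) + a^2 ≠ 0 := by positivity
    have hb2 : (1:ℝ) + b^2 ≠ 0 := by positivity
    have hre : (1-a^2)/(1+a^2) = (1-b^2)/(1+b^2) := congrArg Complex.re hab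
    have hsq : a^2 = b^2 := by
      field_simp at hre
      nlinarith
    nlinarith [ha.1, hb.1]
  · intro t _
    exact key t
  · exact Set.Ico_infinite (by norm_num)

lemma exists_onT_ne (k : Polynomial ℂ) (hk : k ≠ 0) : ∃ z, onT z ∧ k.eval z ≠ 0 := by
  by_contra hcon
  push_neg at hcon
  apply hk
  apply Polynomial.eq_zero_of_infinite_isRoot
  apply Set.Infinite.mono _ onT_infinite
  intro z hz
  exact hcon z hz


/-! ### the integral functional A and its properties -/

open MeasureTheory

/-- A(g) = ∫ conj(pn) g / |pi|² dμ -/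
def Aint (μ : Measure ℂ) (pn pi g : Polynomial ℂ) : ℂ :=
  ∫ z, conj' (pn.eval z) * g.eval z / (conj' (pi.eval z) * pi.eval z) ∂μ

lemma aeOnT {μ : Measure ℂ} (hμ : CircleMeasure μ) : ∀ᵐ z ∂μ, onT z := by
  rw [MeasureTheory.ae_iff]
  exact hμ.circ

lemma onT_iff_sphere {z : ℂ} : onT z ↔ z ∈ Metric.sphere (0:ℂ) 1 := by
  rw [mem_sphere_zero_iff_norm, onT]

lemma continuous_conj' : Continuous conj' := Complex.continuous_conj

lemma integral_cmul (μ : Measure ℂ) (r : ℂ) (f : ℂ → ℂ) :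
    ∫ z, r * f z ∂μ = r * ∫ z, f z ∂μ := by
  simpa [smul_eq_mul] using integral_smul (μ := μ) r f

lemma measurable_ratio (a b d : Polynomial ℂ) :
    Measurable (fun z => conj' (a.eval z) * b.eval z / (conj' (d.eval z) * d.eval z)) := by
  have h1 : ∀ q : Polynomial ℂ, Measurable (fun z : ℂ => q.eval z) :=
    fun q => (Polynomial.continuous q).measurable
  have h2 : ∀ q : Polynomial ℂ, Measurable (fun z : ℂ => conj' (q.eval z)) :=
    fun q => (continuous_conj'.comp (Polynomial.continuous q)).measurable
  exact ((h2 a).mul (h1 b)).div ((h2 d).mul (h1 d))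

lemma integrable_ratio {μ : Measure ℂ} (hμ : CircleMeasure μ) (a b d : Polynomial ℂ)
    (hd : ∀ z, onT z → d.eval z ≠ 0) :
    Integrable (fun z => conj' (a.eval z) * b.eval z / (conj' (d.eval z) * d.eval z)) μ := by
  haveI := hμ.prob
  have hco : ContinuousOn (fun z => conj' (a.eval z) * b.eval z / (conj' (d.eval z) * d.eval z))
      (Metric.sphere (0:ℂ) 1) := by
    apply ContinuousOn.div
    · exact ((continuous_conj'.comp (Polynomial.continuous a)).mul
        (Polynomial.continuous b)).continuousOn
    · exact ((continuous_conj'.comp (Polynomial.continuous d)).mul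
        (Polynomial.continuous d)).continuousOn
    · intro z hz
      have hdz := hd z (onT_iff_sphere.mpr hz)
      exact mul_ne_zero (conj'_ne_zero hdz) hdz
  obtain ⟨C, hC⟩ := (isCompact_sphere (0:ℂ) 1).exists_bound_of_continuousOn hco
  apply Integrable.mono' (integrable_const C) (measurable_ratio a b d).aestronglyMeasurable
  filter_upwards [aeOnT hμ] with z hz
  exact hC z (onT_iff_sphere.mp hz)

lemma Aint_add {μ : Measure ℂ} (hμ : CircleMeasure μ) (pn d g₁ g₂ : Polynomial ℂ)
    (hd : ∀ z, onT z → d.eval z ≠ 0) :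
    Aint μ pn d (g₁ + g₂) = Aint μ pn d g₁ + Aint μ pn d g₂ := by
  unfold Aint
  rw [← integral_add (integrable_ratio hμ pn g₁ d hd) (integrable_ratio hμ pn g₂ d hd)]
  apply integral_congr_ae
  apply Filter.Eventually.of_forall
  intro z
  simp only [eval_add]
  ring

/-- the substar flip: ∫ conj(P) g/|π|² = conj ∫ conj(p) g̃/|π|² -/
lemma conj_flip {μ : Measure ℂ} (hμ : CircleMeasure μ) (n : ℕ) (pn g d : Polynomial ℂ)
    (hpn : pn.natDegree ≤ n) (hg : g.natDegree ≤ n) :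
    (∫ z, conj' ((pstar n pn).eval z) * g.eval z / (conj' (d.eval z) * d.eval z) ∂μ)
      = conj' (Aint μ pn d (pstar n g)) := by
  rw [Aint, conj', ← integral_conj]
  apply integral_congr_ae
  filter_upwards [aeOnT hμ] with z hz
  rw [pstar_eval_onT hpn hz, pstar_eval_onT hg hz]
  simp only [conj', map_mul, map_div₀, map_pow, Complex.conj_conj]
  ring

lemma not_vanish {μ : Measure ℂ} (hμ : CircleMeasure μ) (R : ℂ → ℂ) (G : ℂ → ℂ)
    (hRm : Measurable R) (hGint : Integrable G μ) (hG0 : ∫ z, G z ∂μ = 0)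
    (hGR : ∀ z, onT z → G z = ((‖R z‖^2 : ℝ) : ℂ))
    (z₀ : ℂ) (hz₀T : onT z₀) (hz₀ : R z₀ ≠ 0) (hRc : ContinuousAt R z₀) : False := by
  haveI := hμ.prob
  set F : ℂ → ℝ := fun z => ‖R z‖^2 with hF
  have hFae : (fun z => ((F z : ℝ) : ℂ)) =ᵐ[μ] G := by
    filter_upwards [aeOnT hμ] with z hz
    exact (hGR z hz).symm
  have hFCint : Integrable (fun z => ((F z : ℝ) : ℂ)) μ := hGint.congr hFae.symm
  have hFint : Integrable F μ := by
    have h1 : Integrable (fun z => ‖((F z : ℝ) : ℂ)‖) μ := hFCint.norm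
    have h2 : (fun z => ‖((F z : ℝ) : ℂ)‖) = F := by
      funext z
      rw [Complex.norm_real]
      exact abs_of_nonneg (by positivity)
    rwa [h2] at h1
  have hFzero : ∫ z, F z ∂μ = 0 := by
    have h4 : ∫ z, ((F z : ℝ) : ℂ) ∂μ = 0 := (integral_congr_ae hFae).trans hG0
    have h5 : ((∫ z, F z ∂μ : ℝ) : ℂ) = 0 :=
      (integral_ofReal (𝕜 := ℂ) (f := F) (μ := μ)).symm.trans h4
    exact_mod_cast h5
  have hFaezero : F =ᵐ[μ] 0 :=
    (integral_eq_zero_iff_of_nonneg_ae (Filter.Eventually.of_forall (fun z => by positivity))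
      hFint).1 hFzero
  have hnull : μ {z | F z ≠ 0} = 0 := by
    have := hFaezero
    rw [Filter.EventuallyEq, MeasureTheory.ae_iff] at this
    simpa using this
  obtain ⟨U, hUsub, hUopen, hz₀U⟩ := mem_nhds_iff.1 (hRc.eventually_ne hz₀)
  have hUF : U ⊆ {z | F z ≠ 0} := by
    intro z hz
    have : R z ≠ 0 := hUsub hz
    simp only [Set.mem_setOf_eq, hF]
    exact pow_ne_zero 2 (norm_ne_zero_iff.2 this)
  have hpos := hμ.pos U hUopen ⟨z₀, hz₀U, hz₀T⟩
  have : μ U = 0 := le_antisymm ((measure_mono hUF).trans hnull.le) zero_le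
  rw [this] at hpos
  exact lt_irrefl 0 hpos



/-! ### consequences of orthogonality -/

section ORFMain

variable {α : ℕ → ℂ} {c : ℕ → Bool} {μ : Measure ℂ} {φ : ℕ → ℂ → ℂ} {p : ℕ → Polynomial ℂ}

lemma A_w_mul (hμ : CircleMeasure μ) (hα : ∀ j, ‖α j‖ < 1)
    (hφ : IsORF μ (piG α c) φ p) (m : ℕ) (r : Polynomial ℂ) (hr : r.natDegree ≤ m) :
    Aint μ (p (m+1)) (piG α c (m+1)) (wG α c (m+1) * r) = 0 := by
  have hmem : (fun z => r.eval z / (piG α c ((m+1) - 1)).eval z) ∈ Lsp (piG α c) ((m+1) - 1) :=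
    ⟨r, by simpa using hr, fun z _ => rfl⟩
  have horth := hφ.orth (m+1) (by omega) _ hmem
  unfold inn at horth
  rw [Aint, ← horth]
  apply integral_congr_ae
  filter_upwards [aeOnT hμ] with z hz
  rw [hφ.rep]
  have hπm : (piG α c m).eval z ≠ 0 := piG_eval_ne α c hα hz m
  have hw : (wG α c (m+1)).eval z ≠ 0 := wG_eval_ne α c hα hz (m+1)
  simp only [Nat.add_sub_cancel]
  rw [piG_succ α c m]
  simp only [eval_mul, conj', map_div₀, map_mul]
  have hπm' : (starRingEnd ℂ) ((piG α c m).eval z) ≠ 0 := conj'_ne_zero hπm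
  have hw' : (starRingEnd ℂ) ((wG α c (m+1)).eval z) ≠ 0 := conj'_ne_zero hw
  field_simp

lemma A_self (hφ : IsORF μ (piG α c) φ p) (n : ℕ) :
    Aint μ (p n) (piG α c n) (p n) = 1 := by
  have hno := hφ.norm n
  unfold inn at hno
  rw [Aint, ← hno]
  apply integral_congr_ae
  filter_upwards with z
  rw [hφ.rep]
  simp only [conj', map_div₀]
  rw [div_mul_div_comm]

lemma J_eq (hμ : CircleMeasure μ) (hα : ∀ j, ‖α j‖ < 1)
    (n : ℕ) (pn g : Polynomial ℂ) (hpn : pn.natDegree ≤ n) (hg : g.natDegree ≤ n) (w : ℂ) :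
    Aint μ (pn + Polynomial.C w * pstar n pn) (piG α c n) g
      = Aint μ pn (piG α c n) g
        + conj' w * conj' (Aint μ pn (piG α c n) (pstar n g)) := by
  have hd : ∀ z, onT z → (piG α c n).eval z ≠ 0 :=
    fun z hz => piG_eval_ne α c hα hz n
  rw [Aint]
  have hsplit : (fun z => conj' ((pn + Polynomial.C w * pstar n pn).eval z) * g.eval z
        / (conj' ((piG α c n).eval z) * (piG α c n).eval z))
      = (fun z => conj' (pn.eval z) * g.eval z
            / (conj' ((piG α c n).eval z) * (piG α c n).eval z)
          + conj' w * (conj' ((pstar n pn).eval z) * g.eval z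
            / (conj' ((piG α c n).eval z) * (piG α c n).eval z))) := by
    funext z
    simp only [eval_add, eval_mul, eval_C, conj', map_add, map_mul]
    ring
  rw [hsplit,
    integral_add (integrable_ratio hμ pn g _ hd)
      ((integrable_ratio hμ (pstar n pn) g _ hd).const_mul _),
    integral_cmul, conj_flip hμ n pn g _ hpn hg]
  rfl

lemma J_vanish (hμ : CircleMeasure μ) (hα : ∀ j, ‖α j‖ < 1)
    (hφ : IsORF μ (piG α c) φ p) (m : ℕ) (u : Polynomial ℂ) (hu : u.natDegree ≤ m) (w : ℂ) :
    Aint μ (p (m+2) + Polynomial.C w * pstar (m+2) (p (m+2))) (piG α c (m+2))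
      (wG α c (m+2) * (pstar 1 (wG α c (m+2)) * u)) = 0 := by
  have hdϖ : (wG α c (m+2)).natDegree ≤ 1 := natDegree_wG_le α c (m+2)
  have hdwt : (pstar 1 (wG α c (m+2))).natDegree ≤ 1 := natDegree_pstar_le 1 _
  have hdwtu : (pstar 1 (wG α c (m+2)) * u).natDegree ≤ m + 1 :=
    natDegree_mul_le.trans (by omega)
  have hdg : (wG α c (m+2) * (pstar 1 (wG α c (m+2)) * u)).natDegree ≤ m + 2 :=
    natDegree_mul_le.trans (by omega)
  rw [J_eq hμ hα (m+2) _ _ (hφ.deg (m+2)) hdg w]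
  have hA1 : Aint μ (p (m+2)) (piG α c (m+2))
      (wG α c (m+2) * (pstar 1 (wG α c (m+2)) * u)) = 0 :=
    A_w_mul hμ hα hφ (m+1) _ hdwtu
  have h2 : pstar 1 (pstar 1 (wG α c (m+2))) = wG α c (m+2) := pstar_pstar hdϖ
  have hps : pstar (m+2) (wG α c (m+2) * (pstar 1 (wG α c (m+2)) * u))
      = wG α c (m+2) * (pstar 1 (wG α c (m+2)) * pstar m u) := by
    rw [pstar_mul (show m+2 = 1 + (m+1) by omega) hdϖ hdwtu,
        pstar_mul (show m+1 = 1 + m by omega) hdwt hu, h2]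
    ring
  have hA2 : Aint μ (p (m+2)) (piG α c (m+2))
      (pstar (m+2) (wG α c (m+2) * (pstar 1 (wG α c (m+2)) * u))) = 0 := by
    rw [hps]
    exact A_w_mul hμ hα hφ (m+1) _ (natDegree_mul_le.trans
      (by have := natDegree_pstar_le m u; omega))
  rw [hA1, hA2]
  simp [conj']

lemma q_ne_zero (hμ : CircleMeasure μ) (hα : ∀ j, ‖α j‖ < 1)
    (hφ : IsORF μ (piG α c) φ p) (m : ℕ) (w : ℂ) :
    p (m+1) + Polynomial.C w * pstar (m+1) (p (m+1)) ≠ 0 := by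
  intro h0
  have hpq : p (m+1) = Polynomial.C (-w) * pstar (m+1) (p (m+1)) := by
    rw [map_neg, neg_mul]
    linear_combination h0
  have hd : ∀ z, onT z → (piG α c (m+1)).eval z ≠ 0 :=
    fun z hz => piG_eval_ne α c hα hz (m+1)
  have hvan : ∀ h : Polynomial ℂ, h.natDegree ≤ m+1 →
      Aint μ (p (m+1)) (piG α c (m+1)) h = 0 := by
    intro h hh
    obtain ⟨r, s, hr, hs, hrs⟩ := span_lemma α c hα (m+1) (by omega) h hh
    simp only [Nat.add_sub_cancel] at hr hs
    rw [hrs, Aint_add hμ _ _ _ _ hd, A_w_mul hμ hα hφ m r hr]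
    have hwtdeg : (pstar 1 (wG α c (m+1)) * s).natDegree ≤ m + 1 :=
      natDegree_mul_le.trans (by have := natDegree_pstar_le 1 (wG α c (m+1)); omega)
    have hA2 : Aint μ (p (m+1)) (piG α c (m+1)) (pstar 1 (wG α c (m+1)) * s) = 0 := by
      rw [Aint]
      have hsplit : (fun z => conj' ((p (m+1)).eval z)
            * (pstar 1 (wG α c (m+1)) * s).eval z
            / (conj' ((piG α c (m+1)).eval z) * (piG α c (m+1)).eval z))
          = fun z => conj' (-w) * (conj' ((pstar (m+1) (p (m+1))).eval z)
            * (pstar 1 (wG α c (m+1)) * s).eval z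
            / (conj' ((piG α c (m+1)).eval z) * (piG α c (m+1)).eval z)) := by
        funext z
        conv_lhs => rw [hpq]
        simp only [eval_mul, eval_C, eval_neg, conj', map_mul, map_neg]
        ring
      rw [hsplit, integral_cmul, conj_flip hμ (m+1) _ _ _ (hφ.deg (m+1)) hwtdeg]
      have hps : pstar (m+1) (pstar 1 (wG α c (m+1)) * s)
          = wG α c (m+1) * pstar m s := by
        rw [pstar_mul (show m+1 = 1 + m by omega) (natDegree_pstar_le 1 _) hs,
            pstar_pstar (natDegree_wG_le α c (m+1))]
      rw [hps, A_w_mul hμ hα hφ m (pstar m s) (natDegree_pstar_le m s)]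
      simp [conj']
    rw [hA2]
    simp
  have h1 := A_self hφ (m+1)
  rw [hvan (p (m+1)) (hφ.deg (m+1))] at h1
  exact one_ne_zero h1.symm

lemma factor_contra (hμ : CircleMeasure μ) (hα : ∀ j, ‖α j‖ < 1)
    (hφ : IsORF μ (piG α c) φ p) (m : ℕ) (w ξ : ℂ) (h : Polynomial ℂ) (hh : h ≠ 0)
    (hdeg : h.natDegree ≤ m)
    (hfac : p (m+2) + Polynomial.C w * pstar (m+2) (p (m+2))
      = (Polynomial.X - Polynomial.C ξ)
        * ((1 - Polynomial.C (conj' ξ) * Polynomial.X) * h)) : False := by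
  have hJ := J_vanish hμ hα hφ m h hdeg w
  have h1ne : (1 - Polynomial.C (conj' ξ) * Polynomial.X) ≠ 0 := by
    intro hcon
    have := congrArg (Polynomial.eval 0) hcon
    simp at this
  obtain ⟨z₀, hz₀T, hz₀ne⟩ := exists_onT_ne _ (mul_ne_zero h1ne hh)
  have hπz₀ : (piG α c (m+2)).eval z₀ ≠ 0 := piG_eval_ne α c hα hz₀T (m+2)
  have hϖz₀ : (wG α c (m+2)).eval z₀ ≠ 0 := wG_eval_ne α c hα hz₀T (m+2)
  simp only [eval_mul, eval_sub, eval_one, eval_X, eval_C, mul_ne_zero_iff] at hz₀ne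
  set R : ℂ → ℂ := fun z => (1 - conj' ξ * z)
    * (h.eval z * ((wG α c (m+2)).eval z / (piG α c (m+2)).eval z)) with hR
  have hcont1 : Continuous fun z : ℂ => 1 - conj' ξ * z :=
    continuous_const.sub (continuous_const.mul continuous_id)
  have hRm : Measurable R :=
    (hcont1.measurable).mul
      (((Polynomial.continuous h).measurable).mul
        (((Polynomial.continuous (wG α c (m+2))).measurable).div
          ((Polynomial.continuous (piG α c (m+2))).measurable)))
  have hRc : ContinuousAt R z₀ :=
    (hcont1.continuousAt).mul
      (((Polynomial.continuous h).continuousAt).mul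
        (ContinuousAt.div ((Polynomial.continuous _).continuousAt)
          ((Polynomial.continuous _).continuousAt) hπz₀))
  have hRz₀ : R z₀ ≠ 0 := by
    rw [hR]
    exact mul_ne_zero hz₀ne.1 (mul_ne_zero hz₀ne.2 (div_ne_zero hϖz₀ hπz₀))
  apply not_vanish hμ R
    (fun z => conj' ((p (m+2) + Polynomial.C w * pstar (m+2) (p (m+2))).eval z)
      * (wG α c (m+2) * (pstar 1 (wG α c (m+2)) * h)).eval z
      / (conj' ((piG α c (m+2)).eval z) * (piG α c (m+2)).eval z))
    hRm (integrable_ratio hμ _ _ _ (fun z hz => piG_eval_ne α c hα hz (m+2))) hJ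
    ?_ z₀ hz₀T hRz₀ hRc
  -- pointwise identity on the circle
  intro z hz
  have hz0 := onT_ne_zero hz
  have hπz : (piG α c (m+2)).eval z ≠ 0 := piG_eval_ne α c hα hz (m+2)
  have hϖz : (wG α c (m+2)).eval z ≠ 0 := wG_eval_ne α c hα hz (m+2)
  have hwtz : (pstar 1 (wG α c (m+2))).eval z = z * conj' ((wG α c (m+2)).eval z) := by
    have := pstar_eval_onT (natDegree_wG_le α c (m+2)) hz
    simpa using this
  rw [norm_sq_cast (R z), hfac, hR]
  simp only [eval_mul, eval_sub, eval_add, eval_one, eval_X, eval_C]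
  rw [hwtz]
  have hcz : (starRingEnd ℂ) z = z⁻¹ := onT_conj hz
  simp only [conj', map_mul, map_sub, map_div₀, map_one, Complex.conj_conj]
  rw [hcz]
  have hπz' : (starRingEnd ℂ) ((piG α c (m+2)).eval z) ≠ 0 := conj'_ne_zero hπz
  field_simp

end ORFMain



lemma pstar_X_sub_C (ξ : ℂ) :
    pstar 1 (Polynomial.X - Polynomial.C ξ)
      = 1 - Polynomial.C (conj' ξ) * Polynomial.X := by
  rw [pstar_one_eq]
  have h0 : (Polynomial.X - Polynomial.C ξ).coeff 0 = -ξ := by simp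
  have h1 : (Polynomial.X - Polynomial.C ξ).coeff 1 = 1 := by simp [coeff_one]
  rw [h0, h1]
  simp only [conj', map_neg, map_one, Polynomial.C_neg, Polynomial.C_1]
  ring

lemma abs_one_of_conj_mul {ξ : ℂ} (h : conj' ξ * ξ = 1) : ‖ξ‖ = 1 := by
  have habs := congrArg Norm.norm h
  rw [norm_mul, conj', Complex.norm_conj, norm_one] at habs
  have hnn := norm_nonneg ξ
  have hfac : (‖ξ‖ - 1) * (‖ξ‖ + 1) = 0 := by nlinarith
  rcases mul_eq_zero.1 hfac with h1 | h2
  · linarith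
  · linarith

lemma one_sub_mul_C {u t : ℂ} (h : u * t = 1) :
    (1 - Polynomial.C u * Polynomial.X) * Polynomial.C (-t)
      = Polynomial.X - Polynomial.C t := by
  have h2 : Polynomial.C u * Polynomial.X * Polynomial.C (-t)
      = Polynomial.C (u * -t) * Polynomial.X := by
    rw [Polynomial.C_mul]; ring
  rw [sub_mul, one_mul, h2, show u * -t = -1 by linear_combination -h]
  simp only [Polynomial.C_neg, Polynomial.C_1]
  ring

end ORFAux


/-- Corollary `corzeros`: for n ≥ 1, τ ∈ 𝕋 and any ν (the sequence γ,
encoded by `c`, is arbitrary: c ≡ true gives ν = α, c ≡ false gives ν = β), the PORF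
Q_n^ν(z,τ) = φ_n^ν(z) + τ φ_n^{ν*}(z) has exactly n zeros, all simple and on 𝕋:
its numerator q = p_n^ν + τ ς_n p_n^{ν*} has degree n and n distinct roots, all of
modulus 1, none of them a root of π_n^ν. -/
theorem stmt14 (α : ℕ → ℂ) (hα0 : α 0 = 0) (hα : ∀ j, ‖α j‖ < 1)
    (c : ℕ → Bool) (μ : Measure ℂ) (hμ : CircleMeasure μ)
    (φ : ℕ → ℂ → ℂ) (p : ℕ → Polynomial ℂ)
    (hφ : IsORF μ (piG α c) φ p) (hnφ : ∀ n, normG α c p n)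
    (n : ℕ) (hn : 1 ≤ n) (τ : ℂ) (hτ : ‖τ‖ = 1) :
    (p n + Polynomial.C (τ * sigProd α n) * pstar n (p n)) ≠ 0 ∧
    (p n + Polynomial.C (τ * sigProd α n) * pstar n (p n)).natDegree = n ∧
    (p n + Polynomial.C (τ * sigProd α n) * pstar n (p n)).roots.toFinset.card = n ∧
    (∀ ξ ∈ (p n + Polynomial.C (τ * sigProd α n) * pstar n (p n)).roots,
      ‖ξ‖ = 1 ∧ (piG α c n).eval ξ ≠ 0) := by
  open ORFAux Polynomial in
  obtain ⟨m, rfl⟩ : ∃ m, n = m + 1 := ⟨n - 1, by omega⟩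
  set w : ℂ := τ * sigProd α (m+1) with hwdef
  set q : Polynomial ℂ := p (m+1) + Polynomial.C w * pstar (m+1) (p (m+1)) with hq
  have hτς : ‖w‖ = 1 := by
    rw [hwdef, norm_mul, hτ, abs_sigProd]; norm_num
  have hw0 : w ≠ 0 := by
    intro h; rw [h] at hτς; simp at hτς
  have hlam0 : conj' w ≠ 0 := conj'_ne_zero hw0
  have hqne : q ≠ 0 := q_ne_zero hμ hα hφ m w
  have hdegq : q.natDegree ≤ m + 1 := by
    rw [hq]
    exact natDegree_add_le_of_degree_le (hφ.deg (m+1))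
      ((natDegree_C_mul_le _ _).trans (natDegree_pstar_le _ _))
  -- self-inversiveness
  have hsi : pstar (m+1) q = Polynomial.C (conj' w) * q := by
    rw [hq, pstar_add, pstar_C_mul, pstar_pstar (hφ.deg (m+1)), mul_add]
    have h2 : Polynomial.C (conj' w) * (Polynomial.C w * pstar (m+1) (p (m+1)))
        = pstar (m+1) (p (m+1)) := by
      rw [← mul_assoc, ← Polynomial.C_mul, unimodular_conj_mul hτς, Polynomial.C_1, one_mul]
    rw [h2]
    ring
  -- the master contradiction
  have contra : ∀ (ξ : ℂ) (h : Polynomial ℂ), h ≠ 0 → h.natDegree + 2 ≤ m + 1 →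
      q = (Polynomial.X - Polynomial.C ξ)
        * ((1 - Polynomial.C (conj' ξ) * Polynomial.X) * h) → False := by
    intro ξ h hh hdeg2 hfac
    obtain ⟨m2, hm2⟩ : ∃ m2, m + 1 = m2 + 2 := ⟨m - 1, by omega⟩
    rw [hq] at hfac
    apply factor_contra hμ hα hφ m2 w ξ h hh (by omega)
    rw [← hm2]
    exact hfac
  -- every zero lies on the circle
  have key : ∀ ξ : ℂ, q.eval ξ = 0 → ‖ξ‖ = 1 := by
    intro ξ hroot
    by_contra habsne
    obtain ⟨g, hg⟩ := (dvd_iff_isRoot).2 hroot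
    have hg0 : g ≠ 0 := by
      intro h0; exact hqne (by rw [hg, h0, mul_zero])
    have hdegg : g.natDegree ≤ m := by
      have := natDegree_mul (X_sub_C_ne_zero ξ) hg0
      rw [← hg] at this
      rw [natDegree_X_sub_C] at this
      omega
    have hstar : (1 - Polynomial.C (conj' ξ) * Polynomial.X) * pstar m g
        = Polynomial.C (conj' w) * ((Polynomial.X - Polynomial.C ξ) * g) := by
      rw [← pstar_X_sub_C, ← pstar_mul (show m + 1 = 1 + m by omega)
        (by rw [natDegree_X_sub_C]) hdegg, ← hg, hsi, hg]
    by_cases hξ0 : ξ = 0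
    · -- root at the origin
      subst hξ0
      have hstar' : pstar m g = Polynomial.C (conj' w) * (Polynomial.X * g) := by
        have : conj' (0:ℂ) = 0 := by simp [conj']
        rw [this] at hstar
        simpa using hstar
      have hdeg1 : (Polynomial.C (conj' w) * (Polynomial.X * g)).natDegree
          = 1 + g.natDegree := by
        rw [natDegree_C_mul hlam0, natDegree_mul Polynomial.X_ne_zero hg0, natDegree_X]
      have hdegle : g.natDegree + 2 ≤ m + 1 := by
        have := natDegree_pstar_le m g
        rw [hstar'] at this
        omega
      apply contra 0 g hg0 hdegle
      rw [hg]
      have : conj' (0:ℂ) = 0 := by simp [conj']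
      rw [this]
      simp
    · -- root off the circle, away from the origin
      have hconj0 : conj' ξ ≠ 0 := conj'_ne_zero hξ0
      set t : ℂ := (conj' ξ)⁻¹ with ht
      have ht0 : t ≠ 0 := inv_ne_zero hconj0
      have hut : conj' ξ * t = 1 := mul_inv_cancel₀ hconj0
      have htξ : t ≠ ξ := by
        intro h
        exact habsne (abs_one_of_conj_mul (h ▸ hut))
      have heval := congrArg (Polynomial.eval t) hstar
      simp only [eval_mul, eval_sub, eval_add, eval_one, eval_X, eval_C] at heval
      rw [hut] at heval
      simp only [sub_self, zero_mul] at heval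
      have hgt : g.eval t = 0 := by
        rcases mul_eq_zero.1 heval.symm with h1 | h1
        · exact absurd h1 hlam0
        · rcases mul_eq_zero.1 h1 with h2 | h2
          · exact absurd (sub_eq_zero.1 h2) htξ
          · exact h2
      obtain ⟨k, hk⟩ := (dvd_iff_isRoot).2 hgt
      have hk0 : k ≠ 0 := by
        intro h0; exact hg0 (by rw [hk, h0, mul_zero])
      have hdegk : k.natDegree + 1 ≤ m := by
        have := natDegree_mul (X_sub_C_ne_zero t) hk0
        rw [← hk, natDegree_X_sub_C] at this
        omega
      apply contra ξ (Polynomial.C (-t) * k)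
        (mul_ne_zero (by simpa using neg_ne_zero.2 ht0) hk0)
        ((by have := natDegree_C_mul_le (-t) k; omega))
      rw [hg, hk, ← one_sub_mul_C hut]
      ring
  -- no multiple zeros
  have key2 : ∀ ξ : ℂ, ‖ξ‖ = 1 →
      ¬ ((Polynomial.X - Polynomial.C ξ)^2 ∣ q) := by
    intro ξ habs1 hdvd
    obtain ⟨k, hk⟩ := hdvd
    have hk0 : k ≠ 0 := by
      intro h0; exact hqne (by rw [hk, h0, mul_zero])
    have hsq : ((Polynomial.X - Polynomial.C ξ)^2).natDegree = 2 := by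
      rw [natDegree_pow, natDegree_X_sub_C]
    have hdegk : k.natDegree + 2 ≤ m + 1 := by
      have := natDegree_mul (pow_ne_zero 2 (X_sub_C_ne_zero ξ)) hk0
      rw [← hk, hsq] at this
      omega
    have hut : conj' ξ * ξ = 1 := onT_conj_mul habs1
    apply contra ξ (Polynomial.C (-ξ) * k)
      (mul_ne_zero (by
        simpa using neg_ne_zero.2 (fun h0 => by rw [h0] at habs1; simp at habs1)) hk0)
      ((by have := natDegree_C_mul_le (-ξ) k; omega))
    rw [hk, ← one_sub_mul_C hut]
    ring
  -- degree is exactly n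
  have hc0 : q.coeff 0 ≠ 0 := by
    rw [Polynomial.coeff_zero_eq_eval_zero]
    intro h0
    have := key 0 h0
    simp at this
  have hcn : q.coeff (m+1) ≠ 0 := by
    have hco := congrArg (fun r : Polynomial ℂ => r.coeff (m+1)) hsi
    simp only [pstar_coeff, le_refl, if_pos, Nat.sub_self, coeff_C_mul] at hco
    intro h0
    rw [h0, mul_zero] at hco
    exact (conj'_ne_zero hc0) hco
  have hdeg : q.natDegree = m + 1 :=
    le_antisymm hdegq (le_natDegree_of_ne_zero hcn)
  -- roots: n of them, all distinct
  have hcard : q.roots.card = m + 1 := by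
    rw [(Polynomial.splits_iff_card_roots).1 (IsAlgClosed.splits q), hdeg]
  have hnodup : q.roots.Nodup := by
    rw [Multiset.nodup_iff_count_le_one]
    intro a
    rw [Polynomial.count_roots]
    by_contra hcon
    push_neg at hcon
    have h2le : 2 ≤ q.rootMultiplicity a := hcon
    have hdvd2 : (Polynomial.X - Polynomial.C a)^2 ∣ q :=
      (pow_dvd_pow _ h2le).trans (q.pow_rootMultiplicity_dvd a)
    have haroot : q.IsRoot a := by
      rw [← Polynomial.rootMultiplicity_pos hqne]
      omega
    exact key2 a (key a haroot) hdvd2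
  refine ⟨hqne, hdeg, ?_, ?_⟩
  · rw [Multiset.toFinset_card_eq_card_iff_nodup.2 hnodup, hcard]
  · intro ξ hξ
    have hroot : q.eval ξ = 0 := Polynomial.isRoot_of_mem_roots hξ
    have habs1 := key ξ hroot
    exact ⟨habs1, piG_eval_ne α c hα habs1 (m+1)⟩
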